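/- The 5×5 skew-symmetric matrix of linear forms M(x₁,x₂,x₃) = [[0, x₁, 0, 0, x₃], [−x₁, 0, x₂, x₃, 0], [0, −x₂, 0, x₁, 0], [0, −x₃, −x₁, 0, x₂], [−x₃, 0, 0, −x₂, 0]] has rank exactly 4 for every (x₁,x₂,x₃) ∈ ℂ³ with (x₁,x₂,x₃) ≠ (0,0,0). -/

import Mathlib

open Matrix

lemma submatrix_eq_mul' (f g : Fin 4 → Fin 5) (A : Matrix (Fin 5) (Fin 5) ℂ) :
    A.submatrix f g = (Matrix.of fun i k => if k = f i then (1:ℂ) else 0) * A *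
      (Matrix.of fun k j => if k = g j then (1:ℂ) else 0) := by
  ext i j
  simp [Matrix.mul_apply, ite_mul, mul_ite, Finset.sum_ite_eq, Finset.sum_ite_eq']

lemma aux_lb (A : Matrix (Fin 5) (Fin 5) ℂ) (f g : Fin 4 → Fin 5)
    (hd : IsUnit (A.submatrix f g).det) : 4 ≤ A.rank := by
  have h1 : (A.submatrix f g).rank = 4 := by
    rw [Matrix.rank_of_isUnit _ ((Matrix.isUnit_iff_isUnit_det _).mpr hd)]
    simp
  rw [submatrix_eq_mul' f g A] at h1
  set P := (Matrix.of fun i k => if k = f i then (1:ℂ) else 0)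
  set Q := (Matrix.of fun k j => if k = g j then (1:ℂ) else 0)
  calc 4 = (P * A * Q).rank := h1.symm
    _ = (P * (A * Q)).rank := by rw [Matrix.mul_assoc]
    _ ≤ (A * Q).rank := Matrix.rank_mul_le_right _ _
    _ ≤ A.rank := Matrix.rank_mul_le_left _ _

lemma aux_ub (A : Matrix (Fin 5) (Fin 5) ℂ) (v : Fin 5 → ℂ) (hv : v ≠ 0)
    (hAv : A.mulVec v = 0) : A.rank ≤ 4 := by
  set B : Matrix (Fin 5) (Fin 1) ℂ := Matrix.of fun i _ => v i with hB
  have hAB : A * B = 0 := by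
    ext i j
    have := congrFun hAv i
    simpa [hB, Matrix.mul_apply, Matrix.mulVec, dotProduct] using this
  have hBt : (Bᵀ).rank = 1 := by
    have hli : LinearIndependent ℂ (fun _ : Fin 1 => v) :=
      linearIndependent_unique_iff.mpr hv
    have := hli.rank_matrix (M := (Bᵀ : Matrix (Fin 1) (Fin 5) ℂ))
    simpa using this
  have hBr : B.rank = 1 := by rw [← Matrix.rank_transpose]; exact hBt
  have := Matrix.rank_add_rank_le_card_of_mul_eq_zero hAB
  simp [hBr] at this
  omega

theorem stmt0 (x₁ x₂ x₃ : ℂ) (h : (x₁, x₂, x₃) ≠ (0, 0, 0)) :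
    (!![0, x₁, 0, 0, x₃;
       -x₁, 0, x₂, x₃, 0;
       0, -x₂, 0, x₁, 0;
       0, -x₃, -x₁, 0, x₂;
       -x₃, 0, 0, -x₂, 0] : Matrix (Fin 5) (Fin 5) ℂ).rank = 4 := by
  set A : Matrix (Fin 5) (Fin 5) ℂ :=
    !![0, x₁, 0, 0, x₃;
       -x₁, 0, x₂, x₃, 0;
       0, -x₂, 0, x₁, 0;
       0, -x₃, -x₁, 0, x₂;
       -x₃, 0, 0, -x₂, 0] with hA
  have hker : A.mulVec ![x₂^2, -(x₁*x₃), x₁*x₂+x₃^2, -(x₂*x₃), x₁^2] = 0 := by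
    funext i
    fin_cases i <;>
      simp [hA, Matrix.mulVec, dotProduct, Fin.sum_univ_succ] <;> ring
  by_cases h1 : x₁ = 0
  · by_cases h2 : x₂ = 0
    · -- x₃ ≠ 0
      have h3 : x₃ ≠ 0 := by
        intro h3; exact h (by simp [h1, h2, h3])
      have hub : A.rank ≤ 4 := by
        refine aux_ub A _ ?_ hker
        intro hv
        have := congrFun hv 2
        simp [h1, h2] at this
        exact h3 (by simpa [pow_eq_zero_iff] using this)
      have hlb : 4 ≤ A.rank := by
        refine aux_lb A ![0, 1, 3, 4] ![0, 1, 3, 4] ?_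
        have hS : A.submatrix ![0, 1, 3, 4] ![0, 1, 3, 4] =
            !![0, x₁, 0, x₃; -x₁, 0, x₃, 0; 0, -x₃, 0, x₂; -x₃, 0, -x₂, 0] := by
          ext i j
          fin_cases i <;> fin_cases j <;> simp [hA, Matrix.vecHead, Matrix.vecTail]
        rw [hS]
        have hdet : (!![(0:ℂ), x₁, 0, x₃; -x₁, 0, x₃, 0; 0, -x₃, 0, x₂; -x₃, 0, -x₂, 0]).det
            = (x₁ * x₂ + x₃^2)^2 := by
          simp [Matrix.det_succ_row_zero, Fin.sum_univ_succ, Fin.succAbove]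
          ring
        rw [hdet, h1, h2]
        simpa using (pow_ne_zero 2 (pow_ne_zero 2 h3)).isUnit
      omega
    · -- x₂ ≠ 0
      have hub : A.rank ≤ 4 := by
        refine aux_ub A _ ?_ hker
        intro hv
        have := congrFun hv 0
        simp at this
        exact h2 (by simpa [pow_eq_zero_iff] using this)
      have hlb : 4 ≤ A.rank := by
        refine aux_lb A ![1, 2, 3, 4] ![1, 2, 3, 4] ?_
        have hS : A.submatrix ![1, 2, 3, 4] ![1, 2, 3, 4] =
            !![0, x₂, x₃, 0; -x₂, 0, x₁, 0; -x₃, -x₁, 0, x₂; 0, 0, -x₂, 0] := by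
          ext i j
          fin_cases i <;> fin_cases j <;> simp [hA, Matrix.vecHead, Matrix.vecTail]
        rw [hS]
        have hdet : (!![(0:ℂ), x₂, x₃, 0; -x₂, 0, x₁, 0; -x₃, -x₁, 0, x₂; 0, 0, -x₂, 0]).det
            = x₂^4 := by
          simp [Matrix.det_succ_row_zero, Fin.sum_univ_succ, Fin.succAbove]
          ring
        rw [hdet]
        exact (pow_ne_zero 4 h2).isUnit
      omega
  · -- x₁ ≠ 0
    have hub : A.rank ≤ 4 := by
      refine aux_ub A _ ?_ hker
      intro hv
      have := congrFun hv 4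
      simp at this
      exact h1 (by simpa [pow_eq_zero_iff] using this)
    have hlb : 4 ≤ A.rank := by
      refine aux_lb A ![0, 1, 2, 3] ![0, 1, 2, 3] ?_
      have hS : A.submatrix ![0, 1, 2, 3] ![0, 1, 2, 3] =
          !![0, x₁, 0, 0; -x₁, 0, x₂, x₃; 0, -x₂, 0, x₁; 0, -x₃, -x₁, 0] := by
        ext i j
        fin_cases i <;> fin_cases j <;> simp [hA, Matrix.vecHead, Matrix.vecTail]
      rw [hS]
      have hdet : (!![(0:ℂ), x₁, 0, 0; -x₁, 0, x₂, x₃; 0, -x₂, 0, x₁; 0, -x₃, -x₁, 0]).det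
          = x₁^4 := by
        simp [Matrix.det_succ_row_zero, Fin.sum_univ_succ, Fin.succAbove]
        ring
      rw [hdet]
      exact (pow_ne_zero 4 h1).isUnit
    omega
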